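/- Let H be a complex Hilbert space, P0 an orthogonal projection, f0 a unit vector with P0 f0 = f0, and let X ∈ B₂(H) be an anti-Hermitian Hilbert–Schmidt operator. Then Re Tr(X Y*) = 0 for every anti-Hermitian Hilbert–Schmidt Y with Y P0 = P0 Y and Y f0 = 0 if and only if (P0 − f0⊗f0) X (P0 − f0⊗f0) = 0 and (1−P0) X (1−P0) = 0. That is, the horizontal space H_{(P0,f0)} of operators whose diagonal blocks with respect to H = ⟨f0⟩ ⊕ (R(P0)⊖⟨f0⟩) ⊕ N(P0) vanish except possibly the (1,1) entry is the orthogonal complement of the vertical space in B₂(H)_{ah} for the trace inner product. -/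

import Mathlib

open scoped InnerProductSpace
open ContinuousLinearMap

/-- The rank-one operator `x ⊗ y`, with `(x ⊗ y) z = ⟨z, y⟩ x` (inner product linear in
the first variable); in Mathlib's convention this is `z ↦ ⟪y, z⟫ • x`. -/
noncomputable def rankOne {H : Type*} [NormedAddCommGroup H] [InnerProductSpace ℂ H]
    (x y : H) : H →L[ℂ] H :=
  (innerSL ℂ y).smulRight x

/-- `X` is a Hilbert–Schmidt operator, expressed via the Hilbert basis `e`. -/
def IsHilbertSchmidt {H : Type*} [NormedAddCommGroup H] [InnerProductSpace ℂ H]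
    [CompleteSpace H] {ι : Type*} (e : HilbertBasis ι ℂ H) (X : H →L[ℂ] H) : Prop :=
  Summable fun i => ‖X (e i)‖ ^ 2

/-- The real trace inner product `Re Tr(X Y*) = ∑ᵢ Re ⟪X eᵢ, Y eᵢ⟫` of Hilbert–Schmidt
operators, expressed via the Hilbert basis `e`. -/
noncomputable def hsReInner {H : Type*} [NormedAddCommGroup H] [InnerProductSpace ℂ H]
    [CompleteSpace H] {ι : Type*} (e : HilbertBasis ι ℂ H) (X Y : H →L[ℂ] H) : ℝ :=
  ∑' i, ((⟪X (e i), Y (e i)⟫_ℂ : ℂ)).re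

open scoped ComplexConjugate

namespace HSaux

lemma rankOne_apply' {H : Type*} [NormedAddCommGroup H] [InnerProductSpace ℂ H]
    (x y z : H) : rankOne x y z = ⟪y, z⟫_ℂ • x := rfl

variable {H : Type*} [NormedAddCommGroup H] [InnerProductSpace ℂ H] [CompleteSpace H]
  {ι : Type*} (e : HilbertBasis ι ℂ H)

lemma adj_mul (A B : H →L[ℂ] H) :
    ContinuousLinearMap.adjoint (A * B)
      = ContinuousLinearMap.adjoint B * ContinuousLinearMap.adjoint A := by
  rw [← star_eq_adjoint, ← star_eq_adjoint, ← star_eq_adjoint, star_mul]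

omit [CompleteSpace H] in
lemma coeff_hasSum (x : H) : HasSum (fun j => ‖⟪x, e j⟫_ℂ‖ ^ 2) (‖x‖ ^ 2) := by
  have h := (e.hasSum_inner_mul_inner x x).mapL Complex.reCLM
  have hx : Complex.reCLM ⟪x, x⟫_ℂ = ‖x‖ ^ 2 := by
    simpa using inner_self_eq_norm_sq (𝕜 := ℂ) x
  rw [← hx]
  refine h.congr_fun fun j => ?_
  rw [← inner_conj_symm (e j) x, RCLike.mul_conj]
  simp [← Complex.ofReal_pow]

lemma coeff_summable {A : H →L[ℂ] H} (hA : IsHilbertSchmidt e A) :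
    Summable fun p : ι × ι => ‖⟪A (e p.1), e p.2⟫_ℂ‖ ^ 2 := by
  rw [summable_prod_of_nonneg (fun p => sq_nonneg _)]
  refine ⟨fun i => (coeff_hasSum e (A (e i))).summable, ?_⟩
  have : (fun i => ∑' j, ‖⟪A (e i), e j⟫_ℂ‖ ^ 2) = fun i => ‖A (e i)‖ ^ 2 := by
    funext i; exact (coeff_hasSum e (A (e i))).tsum_eq
  rw [this]; exact hA

lemma hs_adjoint {A : H →L[ℂ] H} (hA : IsHilbertSchmidt e A) :
    IsHilbertSchmidt e (ContinuousLinearMap.adjoint A) := by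
  have h := ((Equiv.prodComm ι ι).summable_iff).mpr (coeff_summable e hA)
  have h2 : Summable fun p : ι × ι =>
      ‖⟪(ContinuousLinearMap.adjoint A) (e p.1), e p.2⟫_ℂ‖ ^ 2 := by
    refine h.congr fun p => ?_
    have h1 : ⟪(ContinuousLinearMap.adjoint A) (e p.1), e p.2⟫_ℂ
        = conj ⟪A (e p.2), e p.1⟫_ℂ := by
      rw [adjoint_inner_left, ← inner_conj_symm]
    simp [Function.comp, h1, RCLike.norm_conj]
    rw [← inner_conj_symm, Complex.norm_conj]
  have h3 := (summable_prod_of_nonneg (fun p => sq_nonneg _)).mp h2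
  have : (fun i => ∑' j, ‖⟪(ContinuousLinearMap.adjoint A) (e i), e j⟫_ℂ‖ ^ 2)
      = fun i => ‖(ContinuousLinearMap.adjoint A) (e i)‖ ^ 2 := by
    funext i; exact (coeff_hasSum e _).tsum_eq
  have h4 := h3.2
  rwa [this] at h4

lemma hs_comp_left {A : H →L[ℂ] H} (hA : IsHilbertSchmidt e A) (B : H →L[ℂ] H) :
    IsHilbertSchmidt e (B * A) := by
  refine Summable.of_nonneg_of_le (fun i => sq_nonneg _) (fun i => ?_) (hA.mul_left (‖B‖ ^ 2))
  rw [ContinuousLinearMap.mul_apply]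
  calc ‖B (A (e i))‖ ^ 2 ≤ (‖B‖ * ‖A (e i)‖) ^ 2 := by
        apply pow_le_pow_left₀ (norm_nonneg _) (B.le_opNorm _)
    _ = ‖B‖ ^ 2 * ‖A (e i)‖ ^ 2 := by ring

lemma hs_comp_right {A : H →L[ℂ] H} (hA : IsHilbertSchmidt e A) (B : H →L[ℂ] H) :
    IsHilbertSchmidt e (A * B) := by
  have h := hs_adjoint e (hs_comp_left e (hs_adjoint e hA) (ContinuousLinearMap.adjoint B))
  rwa [← adj_mul, adjoint_adjoint] at h

lemma summable_inner {A B : H →L[ℂ] H} (hA : IsHilbertSchmidt e A)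
    (hB : IsHilbertSchmidt e B) : Summable fun i => ⟪A (e i), B (e i)⟫_ℂ := by
  apply Summable.of_norm
  refine Summable.of_nonneg_of_le (fun i => norm_nonneg _) (fun i => ?_)
    ((hA.add hB).mul_left (1 / 2))
  have h1 := norm_inner_le_norm (𝕜 := ℂ) (A (e i)) (B (e i))
  nlinarith [sq_nonneg (‖A (e i)‖ - ‖B (e i)‖), norm_nonneg (A (e i)), norm_nonneg (B (e i))]

lemma hsInner_symm {A B : H →L[ℂ] H} (hA : IsHilbertSchmidt e A)
    (hB : IsHilbertSchmidt e B) :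
    (∑' i, ⟪A (e i), B (e i)⟫_ℂ)
      = ∑' j, ⟪(ContinuousLinearMap.adjoint B) (e j),
          (ContinuousLinearMap.adjoint A) (e j)⟫_ℂ := by
  set F : ι → ι → ℂ := fun i j => ⟪A (e i), e j⟫_ℂ * ⟪e j, B (e i)⟫_ℂ with hF
  have hrow : ∀ i, HasSum (fun j => F i j) ⟪A (e i), B (e i)⟫_ℂ := fun i =>
    e.hasSum_inner_mul_inner (A (e i)) (B (e i))
  have hcol : ∀ j, HasSum (fun i => F i j)
      ⟪(ContinuousLinearMap.adjoint B) (e j), (ContinuousLinearMap.adjoint A) (e j)⟫_ℂ := by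
    intro j
    have h := e.hasSum_inner_mul_inner ((ContinuousLinearMap.adjoint B) (e j))
      ((ContinuousLinearMap.adjoint A) (e j))
    refine h.congr_fun fun i => ?_
    rw [hF]
    have h1 : ⟪(ContinuousLinearMap.adjoint B) (e j), e i⟫_ℂ = ⟪e j, B (e i)⟫_ℂ :=
      adjoint_inner_left B (e i) (e j)
    have h2 : ⟪e i, (ContinuousLinearMap.adjoint A) (e j)⟫_ℂ = ⟪A (e i), e j⟫_ℂ :=
      adjoint_inner_right A (e i) (e j)
    rw [h1, h2, mul_comm]
  have hFs : Summable (Function.uncurry F) := by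
    apply Summable.of_norm
    have h1 := coeff_summable e hA
    have h2 := coeff_summable e hB
    refine Summable.of_nonneg_of_le (fun p => norm_nonneg _) (fun p => ?_)
      ((h1.add h2).mul_left (1 / 2))
    have hb : ‖⟪e p.2, B (e p.1)⟫_ℂ‖ = ‖⟪B (e p.1), e p.2⟫_ℂ‖ := norm_inner_symm _ _
    have hval : ‖Function.uncurry F p‖
        = ‖⟪A (e p.1), e p.2⟫_ℂ‖ * ‖⟪B (e p.1), e p.2⟫_ℂ‖ := by
      show ‖F p.1 p.2‖ = _
      rw [hF, norm_mul, hb]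
    rw [hval]
    nlinarith [sq_nonneg (‖⟪A (e p.1), e p.2⟫_ℂ‖ - ‖⟪B (e p.1), e p.2⟫_ℂ‖),
      norm_nonneg (⟪A (e p.1), e p.2⟫_ℂ), norm_nonneg (⟪B (e p.1), e p.2⟫_ℂ)]
  calc (∑' i, ⟪A (e i), B (e i)⟫_ℂ) = ∑' i, ∑' j, F i j := by
        refine tsum_congr fun i => ((hrow i).tsum_eq).symm
    _ = ∑' j, ∑' i, F i j :=
        (Summable.tsum_comm' hFs (fun i => (hrow i).summable) (fun j => (hcol j).summable)).symm
    _ = ∑' j, ⟪(ContinuousLinearMap.adjoint B) (e j),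
          (ContinuousLinearMap.adjoint A) (e j)⟫_ℂ :=
        tsum_congr fun j => (hcol j).tsum_eq

omit [CompleteSpace H] in
lemma left_move {A B Q : H →L[ℂ] H} [CompleteSpace H]
    (hQ : ContinuousLinearMap.adjoint Q = Q) :
    (∑' i, ⟪(Q * A) (e i), B (e i)⟫_ℂ) = ∑' i, ⟪A (e i), (Q * B) (e i)⟫_ℂ :=
  tsum_congr fun i => by
    rw [ContinuousLinearMap.mul_apply, ContinuousLinearMap.mul_apply]
    nth_rewrite 1 [← hQ]
    exact adjoint_inner_left Q (B (e i)) (A (e i))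

lemma right_move {A B : H →L[ℂ] H} (hA : IsHilbertSchmidt e A) (hB : IsHilbertSchmidt e B)
    {Q : H →L[ℂ] H} (hQ : ContinuousLinearMap.adjoint Q = Q) :
    (∑' i, ⟪(A * Q) (e i), B (e i)⟫_ℂ) = ∑' i, ⟪A (e i), (B * Q) (e i)⟫_ℂ := by
  rw [hsInner_symm e (hs_comp_right e hA Q) hB, hsInner_symm e hA (hs_comp_right e hB Q)]
  refine tsum_congr fun j => ?_
  rw [adj_mul, adj_mul, hQ, ContinuousLinearMap.mul_apply, ContinuousLinearMap.mul_apply]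
  symm
  nth_rewrite 1 [← hQ]
  exact adjoint_inner_left Q _ _

lemma conj_move {A B : H →L[ℂ] H} (hA : IsHilbertSchmidt e A) (hB : IsHilbertSchmidt e B)
    {Q : H →L[ℂ] H} (hQ : ContinuousLinearMap.adjoint Q = Q) :
    (∑' i, ⟪A (e i), (Q * B * Q) (e i)⟫_ℂ) = ∑' i, ⟪(Q * A * Q) (e i), B (e i)⟫_ℂ := by
  have h1 := right_move e hA (hs_comp_left e hB Q) hQ
  have h2 := left_move e (A := A * Q) (B := B) hQ
  rw [← h1, ← h2, ← mul_assoc]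

lemma block_vanish {X P : H →L[ℂ] H} (hX : IsHilbertSchmidt e X)
    (hPadj : ContinuousLinearMap.adjoint P = P) (hPP : P * P = P)
    (h0 : (∑' i, (⟪X (e i), (P * X * P) (e i)⟫_ℂ).re) = 0) : P * X * P = 0 := by
  set Z : H →L[ℂ] H := P * X * P with hZ
  have hZhs : IsHilbertSchmidt e Z := hs_comp_right e (hs_comp_left e hX P) P
  have hXZ : (∑' i, ⟪X (e i), Z (e i)⟫_ℂ) = ∑' i, ⟪Z (e i), Z (e i)⟫_ℂ := by
    have h1 := conj_move e hX hX hPadj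
    have h2 := conj_move e hZhs hX hPadj
    have hPZP : P * Z * P = Z := by
      rw [hZ, ← mul_assoc, ← mul_assoc, hPP, mul_assoc (P * X) P P, hPP]
    rw [← hZ] at h1
    rw [← hZ, hPZP] at h2
    rw [h1, ← h2]
  have hsXZ := summable_inner e hX hZhs
  have hsZZ := summable_inner e hZhs hZhs
  have e3 : ∀ i, ((⟪Z (e i), Z (e i)⟫_ℂ)).re = ‖Z (e i)‖ ^ 2 := fun i => by
    simpa using inner_self_eq_norm_sq (𝕜 := ℂ) (Z (e i))
  have h0' : (∑' i, ‖Z (e i)‖ ^ 2) = 0 := by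
    calc (∑' i, ‖Z (e i)‖ ^ 2) = ∑' i, ((⟪Z (e i), Z (e i)⟫_ℂ)).re :=
          tsum_congr fun i => (e3 i).symm
      _ = (∑' i, ⟪Z (e i), Z (e i)⟫_ℂ).re := (Complex.re_tsum hsZZ).symm
      _ = (∑' i, ⟪X (e i), Z (e i)⟫_ℂ).re := by rw [hXZ]
      _ = ∑' i, ((⟪X (e i), Z (e i)⟫_ℂ)).re := Complex.re_tsum hsXZ
      _ = 0 := h0
  have hZs : Summable fun i => ‖Z (e i)‖ ^ 2 := hZhs
  have hz : ∀ i, Z (e i) = 0 := by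
    intro i
    have hle : ‖Z (e i)‖ ^ 2 ≤ 0 := h0' ▸ Summable.le_tsum hZs i fun j _ => sq_nonneg _
    have h := le_antisymm hle (sq_nonneg _)
    have : ‖Z (e i)‖ = 0 := by nlinarith [norm_nonneg (Z (e i))]
    simpa using this
  have hdense : Dense ((Submodule.span ℂ (Set.range (e : ι → H)) : Submodule ℂ H) : Set H) :=
    Submodule.dense_iff_topologicalClosure_eq_top.mpr e.dense_span
  refine ContinuousLinearMap.ext_on hdense ?_
  rintro x ⟨i, rfl⟩
  simpa using hz i

end HSaux

/-- An anti-Hermitian Hilbert–Schmidt `X` is orthogonal (for the real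
trace inner product) to the vertical space at `(P0, f0)` iff its diagonal blocks
`(P0 − f0⊗f0) X (P0 − f0⊗f0)` and `(1−P0) X (1−P0)` vanish, i.e. iff it is horizontal. -/
theorem horizontal_iff_orthogonal_vertical
    {H : Type*} [NormedAddCommGroup H] [InnerProductSpace ℂ H] [CompleteSpace H]
    {ι : Type*} (e : HilbertBasis ι ℂ H)
    (P0 : H →L[ℂ] H) (hP0sa : IsSelfAdjoint P0) (hP0idem : P0 * P0 = P0)
    (f0 : H) (hf0 : ‖f0‖ = 1) (hf0fix : P0 f0 = f0)
    (X : H →L[ℂ] H) (hXhs : IsHilbertSchmidt e X) (hXah : adjoint X = -X) :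
    (∀ Y : H →L[ℂ] H, adjoint Y = -Y → IsHilbertSchmidt e Y →
        Y * P0 = P0 * Y → Y f0 = 0 → hsReInner e X Y = 0) ↔
    ((P0 - rankOne f0 f0) * X * (P0 - rankOne f0 f0) = 0 ∧
      (1 - P0) * X * (1 - P0) = 0) := by
  classical
  open HSaux in
  set Fop : H →L[ℂ] H := rankOne f0 f0 with hFop
  set Q : H →L[ℂ] H := P0 - Fop with hQdef
  set R : H →L[ℂ] H := 1 - P0 with hRdef
  have hP0adj : ContinuousLinearMap.adjoint P0 = P0 := by
    rw [← star_eq_adjoint]; exact hP0sa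
  have hFadj : ContinuousLinearMap.adjoint Fop = Fop := by
    symm
    rw [eq_adjoint_iff]
    intro x y
    simp only [hFop, rankOne_apply', inner_smul_left, inner_smul_right]
    rw [inner_conj_symm]
    ring
  have hP0F : P0 * Fop = Fop := by
    ext z
    simp [mul_apply, hFop, rankOne_apply', hf0fix]
  have hFP0 : Fop * P0 = Fop := by
    ext z
    simp only [ContinuousLinearMap.mul_apply, hFop, rankOne_apply']
    congr 1
    rw [← hP0adj, adjoint_inner_right, hf0fix]
  have hinner_f0 : ⟪f0, f0⟫_ℂ = 1 := by
    rw [inner_self_eq_norm_sq_to_K, hf0]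
    norm_num
  have hFF : Fop * Fop = Fop := by
    ext z
    simp [mul_apply, hFop, rankOne_apply', inner_smul_right, hinner_f0, smul_smul, hf0]
  have hQadj : ContinuousLinearMap.adjoint Q = Q := by
    rw [hQdef, ← star_eq_adjoint, star_sub, star_eq_adjoint, star_eq_adjoint, hP0adj, hFadj]
  have hQQ : Q * Q = Q := by
    rw [hQdef, sub_mul, mul_sub, mul_sub, hP0idem, hP0F, hFP0, hFF]
    abel
  have hQP0 : Q * P0 = Q := by rw [hQdef, sub_mul, hP0idem, hFP0]
  have hP0Q : P0 * Q = Q := by rw [hQdef, mul_sub, hP0idem, hP0F]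
  have hFf0 : Fop f0 = f0 := by
    rw [hFop, rankOne_apply', hinner_f0, one_smul]
  have hQf0 : Q f0 = 0 := by
    rw [hQdef, ContinuousLinearMap.sub_apply, hf0fix, hFf0, sub_self]
  have hRadj : ContinuousLinearMap.adjoint R = R := by
    rw [hRdef, ← star_eq_adjoint, star_sub, star_one, star_eq_adjoint, hP0adj]
  have hRR : R * R = R := by
    rw [hRdef, sub_mul, one_mul, mul_sub, mul_one, hP0idem]
    abel
  have hRf0 : R f0 = 0 := by
    rw [hRdef, ContinuousLinearMap.sub_apply, ContinuousLinearMap.one_apply, hf0fix, sub_self]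
  have hRP0 : R * P0 = 0 := by rw [hRdef, sub_mul, one_mul, hP0idem, sub_self]
  have hP0R : P0 * R = 0 := by rw [hRdef, mul_sub, mul_one, hP0idem, sub_self]
  constructor
  · intro h
    constructor
    · -- Q block
      refine block_vanish e hXhs hQadj hQQ ?_
      have hvert : hsReInner e X (Q * X * Q) = 0 := by
        refine h (Q * X * Q) ?_ (hs_comp_right e (hs_comp_left e hXhs Q) Q) ?_ ?_
        · rw [adj_mul, adj_mul, hQadj, hXah]
          simp [mul_assoc]
        · rw [mul_assoc (Q * X) Q P0, hQP0, ← mul_assoc P0 (Q * X) Q, ← mul_assoc P0 Q X, hP0Q]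
        · simp [mul_apply, hQf0]
      exact hvert
    · -- R block
      refine block_vanish e hXhs hRadj hRR ?_
      have hvert : hsReInner e X (R * X * R) = 0 := by
        refine h (R * X * R) ?_ (hs_comp_right e (hs_comp_left e hXhs R) R) ?_ ?_
        · rw [adj_mul, adj_mul, hRadj, hXah]
          simp [mul_assoc]
        · rw [mul_assoc (R * X) R P0, hRP0, mul_zero, ← mul_assoc P0 (R * X) R,
            ← mul_assoc P0 R X, hP0R, zero_mul, zero_mul]
        · simp [mul_apply, hRf0]
      exact hvert
  · rintro ⟨hQ0, hR0⟩ Y hYah hYhs hYP0 hYf0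
    have hYadj_f0 : (ContinuousLinearMap.adjoint Y) f0 = 0 := by
      rw [hYah]
      simp [hYf0]
    have hYF : Y * Fop = 0 := by
      ext z
      simp [mul_apply, hFop, rankOne_apply', hYf0]
    have hFY : Fop * Y = 0 := by
      ext z
      simp only [ContinuousLinearMap.mul_apply, hFop, rankOne_apply', ContinuousLinearMap.zero_apply]
      have hz : ⟪f0, Y z⟫_ℂ = 0 := by
        rw [← adjoint_inner_left, hYadj_f0, inner_zero_left]
      rw [hz, zero_smul]
    have hYQ : Y * Q = Q * Y := by
      rw [hQdef, mul_sub, sub_mul, hYP0, hYF, hFY]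
    have hYR : Y * R = R * Y := by
      rw [hRdef, mul_sub, sub_mul, mul_one, one_mul, hYP0]
    have hQYQ : Q * Y * Q = Y * Q := by rw [← hYQ, mul_assoc, hQQ]
    have hRYR : R * Y * R = Y * R := by rw [← hYR, mul_assoc, hRR]
    have hYdecomp : Y = Q * Y * Q + R * Y * R := by
      rw [hQYQ, hRYR]
      have h1 : Fop + Q + R = 1 := by rw [hQdef, hRdef]; abel
      calc Y = Y * (Fop + Q + R) := by rw [h1, mul_one]
        _ = Y * Q + Y * R := by rw [mul_add, mul_add, hYF, zero_add]
    have hQYQhs : IsHilbertSchmidt e (Q * Y * Q) := hs_comp_right e (hs_comp_left e hYhs Q) Q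
    have hRYRhs : IsHilbertSchmidt e (R * Y * R) := hs_comp_right e (hs_comp_left e hYhs R) R
    have hs1 := summable_inner e hXhs hQYQhs
    have hs2 := summable_inner e hXhs hRYRhs
    have hz1 : (∑' i, ⟪X (e i), (Q * Y * Q) (e i)⟫_ℂ) = 0 := by
      rw [conj_move e hXhs hYhs hQadj, hQ0]
      simp
    have hz2 : (∑' i, ⟪X (e i), (R * Y * R) (e i)⟫_ℂ) = 0 := by
      rw [conj_move e hXhs hYhs hRadj, hR0]
      simp
    show (∑' i, (⟪X (e i), Y (e i)⟫_ℂ).re) = 0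
    have hpt : ∀ i, (⟪X (e i), Y (e i)⟫_ℂ).re
        = (⟪X (e i), (Q * Y * Q) (e i)⟫_ℂ).re + (⟪X (e i), (R * Y * R) (e i)⟫_ℂ).re := by
      intro i
      conv_lhs => rw [hYdecomp]
      rw [ContinuousLinearMap.add_apply, inner_add_right, Complex.add_re]
    calc (∑' i, (⟪X (e i), Y (e i)⟫_ℂ).re)
        = ∑' i, ((⟪X (e i), (Q * Y * Q) (e i)⟫_ℂ).re
            + (⟪X (e i), (R * Y * R) (e i)⟫_ℂ).re) := tsum_congr hpt
      _ = (∑' i, (⟪X (e i), (Q * Y * Q) (e i)⟫_ℂ).re)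
            + ∑' i, (⟪X (e i), (R * Y * R) (e i)⟫_ℂ).re := by
          refine Summable.tsum_add ?_ ?_
          · exact (Complex.hasSum_re hs1.hasSum).summable
          · exact (Complex.hasSum_re hs2.hasSum).summable
      _ = (∑' i, ⟪X (e i), (Q * Y * Q) (e i)⟫_ℂ).re
            + (∑' i, ⟪X (e i), (R * Y * R) (e i)⟫_ℂ).re := by
          rw [Complex.re_tsum hs1, Complex.re_tsum hs2]
      _ = 0 := by rw [hz1, hz2]; simp
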